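/- There exists an absolute constant K > 0 such that for all integers n ≥ 2 and ℓ ≥ 1 and all functions f : {0,1}^n → {0,1} and g : {0,1}^ℓ × {0,1}^ℓ → {0,1}, the 0,1 matrix M associated with the composed function f∘gⁿ satisfies ⌈log₂ Rbin(M)⌉ ≤ K · UC₁(f) · max(log₂ n, ℓ). -/

import Mathlib

/-- A partition of the ones of a `0,1` matrix `M` into `k` monochromatic
combinatorial rectangles `A t × B t`. -/
def OnesPartition {α β : Type*} (M : α → β → Bool) (k : ℕ)
    (A : Fin k → Set α) (B : Fin k → Set β) : Prop :=
  (∀ t, ∀ x ∈ A t, ∀ y ∈ B t, M x y = true) ∧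
  ∀ x y, M x y = true → ∃! t, x ∈ A t ∧ y ∈ B t

/-- The binary rank of a `0,1` matrix. -/
noncomputable def Rbin {α β : Type*} (M : α → β → Bool) : ℕ :=
  sInf {k | ∃ A B, OnesPartition M k A B}

/-- The composed function `f ∘ gⁿ`, where inputs in `{0,1}^{ℓ·n}` are viewed as
`n` blocks of length `ℓ`. -/
def composed {n ℓ : ℕ} (f : (Fin n → Bool) → Bool)
    (g : (Fin ℓ → Bool) → (Fin ℓ → Bool) → Bool) :
    (Fin n → Fin ℓ → Bool) → (Fin n → Fin ℓ → Bool) → Bool :=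
  fun x y => f fun i => g (x i) (y i)

/-- `f` can be written as a `k`-DNF formula: a disjunction of `m` conjunctions,
the `j`-th conjunction requiring the variables in `I j` (at most `k` of them) to
take the values prescribed by `v j`. -/
def IsDNF {n : ℕ} (f : (Fin n → Bool) → Bool) (k : ℕ)
    (m : ℕ) (I : Fin m → Finset (Fin n)) (v : Fin m → Fin n → Bool) : Prop :=
  (∀ j, (I j).card ≤ k) ∧
  ∀ z, f z = true ↔ ∃ j, ∀ i ∈ I j, z i = v j i

/-- An unambiguous `k`-DNF: every input satisfies at most one conjunction. -/
def IsUnambiguousDNF {n : ℕ} (f : (Fin n → Bool) → Bool) (k : ℕ)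
    (m : ℕ) (I : Fin m → Finset (Fin n)) (v : Fin m → Fin n → Bool) : Prop :=
  IsDNF f k m I v ∧
  ∀ (z : Fin n → Bool) (j j' : Fin m), (∀ i ∈ I j, z i = v j i) → (∀ i ∈ I j', z i = v j' i) → j = j'

/-- The unambiguous 1-certificate complexity `UC₁(f)`: the smallest `k` for which
`f` can be written as an unambiguous `k`-DNF formula. -/
noncomputable def UC1 {n : ℕ} (f : (Fin n → Bool) → Bool) : ℕ :=
  sInf {k | ∃ m I v, IsUnambiguousDNF f k m I v}

/-- Every function has an unambiguous `n`-DNF. -/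
lemma exists_unambiguousDNF {n : ℕ} (f : (Fin n → Bool) → Bool) :
    ∃ m I v, IsUnambiguousDNF f n m I v := by
  classical
  set T : Finset (Fin n → Bool) := Finset.univ.filter (fun z => f z = true) with hT
  refine ⟨T.card, fun _ => Finset.univ, fun j => (T.equivFin.symm j : Fin n → Bool),
    ⟨⟨fun j => by simp, fun z => ?_⟩, fun z j j' hj hj' => ?_⟩⟩
  · constructor
    · intro hz
      have hzT : z ∈ T := by simp [hT, hz]
      refine ⟨T.equivFin ⟨z, hzT⟩, fun i _ => ?_⟩
      simp
    · rintro ⟨j, hj⟩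
      have hzz : z = (T.equivFin.symm j : Fin n → Bool) :=
        funext fun i => hj i (Finset.mem_univ i)
      have hmem := (T.equivFin.symm j).2
      have := Finset.mem_filter.mp hmem
      rw [hzz]
      exact this.2
  · have h1 : z = (T.equivFin.symm j : Fin n → Bool) :=
      funext fun i => hj i (Finset.mem_univ i)
    have h2 : z = (T.equivFin.symm j' : Fin n → Bool) :=
      funext fun i => hj' i (Finset.mem_univ i)
    have : T.equivFin.symm j = T.equivFin.symm j' :=
      Subtype.coe_injective (h1.symm.trans h2)
    exact T.equivFin.symm.injective this

/-- The number of conjunctions in an unambiguous `k`-DNF is at most `(2n+1)^k`. -/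
lemma m_le_of_unambiguous {n k m : ℕ} {f : (Fin n → Bool) → Bool}
    {I : Fin m → Finset (Fin n)} {v : Fin m → Fin n → Bool}
    (h : IsUnambiguousDNF f k m I v) : m ≤ (2 * n + 1) ^ k := by
  classical
  obtain ⟨⟨hcard, _⟩, huniq⟩ := h
  set enc : Fin m → (Fin k → Option (Fin n × Bool)) :=
    fun j t => (((I j).sort (· ≤ ·)).map (fun i => (i, v j i)))[(t : ℕ)]? with henc
  have hlen : ∀ j : Fin m, (((I j).sort (· ≤ ·)).map (fun i => (i, v j i))).length ≤ k := by
    intro j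
    simpa [Finset.length_sort] using hcard j
  have hinj : Function.Injective enc := by
    intro j j' hjj
    have hlist : ((I j).sort (· ≤ ·)).map (fun i => (i, v j i))
        = ((I j').sort (· ≤ ·)).map (fun i => (i, v j' i)) := by
      apply List.ext_getElem?
      intro t
      by_cases ht : t < k
      · exact congrFun hjj ⟨t, ht⟩
      · rw [List.getElem?_eq_none (le_trans (hlen j) (le_of_not_gt ht)),
          List.getElem?_eq_none (le_trans (hlen j') (le_of_not_gt ht))]
    have hsort : (I j).sort (· ≤ ·) = (I j').sort (· ≤ ·) := by
      have := congrArg (List.map Prod.fst) hlist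
      simpa [List.map_map, Function.comp_def] using this
    have hI : I j = I j' := by
      ext i
      rw [← Finset.mem_sort (α := Fin n) (· ≤ ·), hsort, Finset.mem_sort]
    have hv : ∀ i ∈ I j, v j i = v j' i := by
      intro i hi
      have hmem : (i, v j i) ∈ ((I j).sort (· ≤ ·)).map (fun i => (i, v j i)) :=
        List.mem_map.mpr ⟨i, (Finset.mem_sort _).mpr hi, rfl⟩
      rw [hlist] at hmem
      obtain ⟨i', _, hi'⟩ := List.mem_map.mp hmem
      have h1 : i' = i := congrArg Prod.fst hi'
      have h2 : v j' i' = v j i := congrArg Prod.snd hi'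
      rw [h1] at h2
      exact h2.symm
    apply huniq (fun i => if i ∈ I j then v j i else false) j j'
    · intro i hi; simp [hi]
    · intro i hi
      rw [← hI] at hi
      simp only [hi, if_pos]
      exact hv i hi
  calc m = Fintype.card (Fin m) := (Fintype.card_fin m).symm
    _ ≤ Fintype.card (Fin k → Option (Fin n × Bool)) := Fintype.card_le_of_injective enc hinj
    _ = (2 * n + 1) ^ k := by
        simp [Fintype.card_fun]
        ring_nf

/-- Rbin of a composed function is at most `m * 2^(ℓ*k)` given an unambiguous `k`-DNF. -/
lemma rbin_le_of_unambiguous {n ℓ k m : ℕ} (f : (Fin n → Bool) → Bool)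
    (g : (Fin ℓ → Bool) → (Fin ℓ → Bool) → Bool)
    {I : Fin m → Finset (Fin n)} {v : Fin m → Fin n → Bool}
    (h : IsUnambiguousDNF f k m I v) :
    Rbin (composed f g) ≤ m * 2 ^ (ℓ * k) := by
  classical
  obtain ⟨⟨hcard, hDNF⟩, huniq⟩ := h
  let S : Fin m → Type := fun j =>
    {a : Fin n → Fin ℓ → Bool // ∀ i, i ∉ I j → a i = fun _ => false}
  let T := (j : Fin m) × S j
  let e : T ≃ Fin (Fintype.card T) := Fintype.equivFin T
  let A : Fin (Fintype.card T) → Set (Fin n → Fin ℓ → Bool) :=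
    fun t => {x | ∀ i ∈ I (e.symm t).1, x i = (e.symm t).2.1 i}
  let B : Fin (Fintype.card T) → Set (Fin n → Fin ℓ → Bool) :=
    fun t => {y | ∀ i ∈ I (e.symm t).1, g ((e.symm t).2.1 i) (y i) = v (e.symm t).1 i}
  have hpart : OnesPartition (composed f g) (Fintype.card T) A B := by
    constructor
    · intro t x hx y hy
      show f (fun i => g (x i) (y i)) = true
      rw [hDNF]
      exact ⟨(e.symm t).1, fun i hi => by rw [hx i hi]; exact hy i hi⟩
    · intro x y hxy
      have hz : f (fun i => g (x i) (y i)) = true := hxy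
      obtain ⟨j, hj⟩ := (hDNF _).mp hz
      set a : S j := ⟨fun i => if i ∈ I j then x i else fun _ => false,
        fun i hi => if_neg hi⟩ with ha
      refine ⟨e ⟨j, a⟩, ⟨?_, ?_⟩, ?_⟩
      · show ∀ i ∈ I (e.symm (e ⟨j, a⟩)).1, x i = (e.symm (e ⟨j, a⟩)).2.1 i
        rw [Equiv.symm_apply_apply]
        intro i hi
        simp [ha, hi]
      · show ∀ i ∈ I (e.symm (e ⟨j, a⟩)).1,
          g ((e.symm (e ⟨j, a⟩)).2.1 i) (y i) = v (e.symm (e ⟨j, a⟩)).1 i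
        rw [Equiv.symm_apply_apply]
        intro i hi
        simpa [ha, hi] using hj i hi
      · rintro t' ⟨hxA, hyB⟩
        have hxA' : ∀ i ∈ I (e.symm t').1, x i = (e.symm t').2.1 i := hxA
        have hyB' : ∀ i ∈ I (e.symm t').1,
            g ((e.symm t').2.1 i) (y i) = v (e.symm t').1 i := hyB
        have key : e.symm t' = ⟨j, a⟩ := by
          rcases hE : e.symm t' with ⟨j', a'⟩
          rw [hE] at hxA' hyB'
          have hj' : ∀ i ∈ I j', (fun i => g (x i) (y i)) i = v j' i := by
            intro i hi
            simp only []
            rw [hxA' i hi]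
            exact hyB' i hi
          have hjj : j' = j := huniq (fun i => g (x i) (y i)) j' j hj' hj
          subst hjj
          have haa : a' = a := by
            apply Subtype.ext
            funext i
            by_cases hi : i ∈ I j'
            · rw [← hxA' i hi]
              simp [ha, hi]
            · rw [a'.2 i hi, a.2 i hi]
          rw [haa]
        calc t' = e (e.symm t') := (Equiv.apply_symm_apply e t').symm
          _ = e ⟨j, a⟩ := by rw [key]
  have h1 : Rbin (composed f g) ≤ Fintype.card T := Nat.sInf_le ⟨A, B, hpart⟩
  have h2 : Fintype.card T ≤ m * 2 ^ (ℓ * k) := by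
    have hSj : ∀ j, Fintype.card (S j) ≤ 2 ^ (ℓ * k) := by
      intro j
      have e2 : S j ≃ ({ i // i ∈ I j } → (Fin ℓ → Bool)) :=
        { toFun := fun a i => a.1 i.1
          invFun := fun h0 => ⟨fun i => if hi : i ∈ I j then h0 ⟨i, hi⟩ else fun _ => false,
            fun i hi => dif_neg hi⟩
          left_inv := fun a => Subtype.ext (funext fun i => by
            by_cases hi : i ∈ I j
            · simp [hi]
            · simp [hi, a.2 i hi])
          right_inv := fun h0 => funext fun i => by simp [i.2] }
      calc Fintype.card (S j) = (2 ^ ℓ) ^ (I j).card := by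
            rw [Fintype.card_congr e2]
            simp [Fintype.card_fun, Fintype.card_coe]
        _ = 2 ^ (ℓ * (I j).card) := by rw [← pow_mul]
        _ ≤ 2 ^ (ℓ * k) := Nat.pow_le_pow_right (by norm_num)
            (Nat.mul_le_mul_left ℓ (hcard j))
    calc Fintype.card T = ∑ j, Fintype.card (S j) := Fintype.card_sigma
      _ ≤ ∑ _j : Fin m, 2 ^ (ℓ * k) := Finset.sum_le_sum fun j _ => hSj j
      _ = m * 2 ^ (ℓ * k) := by simp [Finset.sum_const, Finset.card_univ]
  exact le_trans h1 h2

/-- There is an absolute constant `K > 0` such that for all `n ≥ 2`, `ℓ ≥ 1`, `f`, `g`,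
the matrix `M` of `f ∘ gⁿ` satisfies `⌈log₂ Rbin M⌉ ≤ K * UC₁(f) * max (log₂ n) ℓ`. -/
theorem stmt3 :
    ∃ K : ℝ, 0 < K ∧
      ∀ (n ℓ : ℕ), 2 ≤ n → 1 ≤ ℓ →
        ∀ (f : (Fin n → Bool) → Bool)
          (g : (Fin ℓ → Bool) → (Fin ℓ → Bool) → Bool),
          (Nat.clog 2 (Rbin (composed f g)) : ℝ)
            ≤ K * (UC1 f : ℝ) * max (Real.logb 2 n) (ℓ : ℝ) := by
  refine ⟨5, by norm_num, ?_⟩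
  intro n ℓ hn hℓ f g
  have hb2 : (1 : ℕ) < 2 := one_lt_two
  have hne : {k | ∃ m I v, IsUnambiguousDNF f k m I v}.Nonempty :=
    ⟨n, exists_unambiguousDNF f⟩
  obtain ⟨m, I, v, hw⟩ := Nat.sInf_mem hne
  set k := UC1 f with hk
  -- natural-number bound
  have hRb : Rbin (composed f g) ≤ 2 ^ ((2 + Nat.clog 2 n) * k + ℓ * k) := by
    have h1 := rbin_le_of_unambiguous f g hw
    have h2 : m ≤ (2 * n + 1) ^ k := m_le_of_unambiguous hw
    have h3 : (2 * n + 1 : ℕ) ≤ 2 ^ (2 + Nat.clog 2 n) := by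
      have hle := Nat.le_pow_clog hb2 n
      calc 2 * n + 1 ≤ 4 * n := by omega
        _ ≤ 4 * 2 ^ Nat.clog 2 n := by omega
        _ = 2 ^ (2 + Nat.clog 2 n) := by rw [pow_add]; norm_num
    calc Rbin (composed f g) ≤ m * 2 ^ (ℓ * k) := h1
      _ ≤ (2 * n + 1) ^ k * 2 ^ (ℓ * k) := Nat.mul_le_mul_right _ h2
      _ ≤ (2 ^ (2 + Nat.clog 2 n)) ^ k * 2 ^ (ℓ * k) :=
          Nat.mul_le_mul_right _ (Nat.pow_le_pow_left h3 k)
      _ = 2 ^ ((2 + Nat.clog 2 n) * k + ℓ * k) := by rw [← pow_mul, ← pow_add]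
  have hclog : Nat.clog 2 (Rbin (composed f g)) ≤ (2 + Nat.clog 2 n) * k + ℓ * k :=
    (Nat.clog_le_iff_le_pow hb2).mpr hRb
  -- pass to the reals
  have hcast : (Nat.clog 2 (Rbin (composed f g)) : ℝ)
      ≤ (2 + (Nat.clog 2 n : ℝ)) * k + ℓ * k := by
    have := (Nat.cast_le (α := ℝ)).mpr hclog
    push_cast at this
    linarith
  set L := Real.logb 2 n with hL
  have hL1 : (1 : ℝ) ≤ L := by
    have h0 : Real.logb 2 2 ≤ Real.logb 2 n :=
      Real.logb_le_logb_of_le one_lt_two (by norm_num) (by exact_mod_cast hn)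
    rwa [Real.logb_self_eq_one one_lt_two] at h0
  have hcn : (Nat.clog 2 n : ℝ) ≤ L + 1 := by
    have h1 : 1 ≤ Nat.clog 2 n := Nat.clog_pos hb2 hn
    have h2 : (2 : ℕ) ^ (Nat.clog 2 n - 1) < n := Nat.pow_pred_clog_lt_self hb2 (by omega)
    have h3 : ((Nat.clog 2 n - 1 : ℕ) : ℝ) < L := by
      have h4 : Real.logb 2 ((2 : ℝ) ^ (Nat.clog 2 n - 1)) < Real.logb 2 n :=
        Real.logb_lt_logb one_lt_two (pow_pos two_pos _) (by exact_mod_cast h2)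
      rwa [Real.logb_pow, Real.logb_self_eq_one one_lt_two, mul_one] at h4
    have h5 := h3
    rw [Nat.cast_sub h1] at h5
    push_cast at h5
    linarith
  have hM1 : L ≤ max L (ℓ : ℝ) := le_max_left _ _
  have hM2 : (ℓ : ℝ) ≤ max L (ℓ : ℝ) := le_max_right _ _
  have hk0 : (0 : ℝ) ≤ (k : ℝ) := Nat.cast_nonneg k
  nlinarith [mul_le_mul_of_nonneg_right hcn hk0, mul_le_mul_of_nonneg_right hM1 hk0,
    mul_le_mul_of_nonneg_right hM2 hk0, mul_le_mul_of_nonneg_right hL1 hk0]
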